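/- Let (sₖ)_{k≥1} be positive integers, m₀ = b, m₁ = b^{s₁-1}a, m_{k+1} = m_k^{s_{k+1}} m_{k-1}, and m_φ the limit infinite word. The words (m_k^t m_{k-1})' for k ≥ 1, 1 ≤ t ≤ s_{k+1}, ordered lexicographically by (k,t), form an increasing (by the prefix order) sequence of palindromic prefixes of m_φ. -/

import Mathlib

/-- `w.drop2` is the word `w` deprived of its last two letters. -/
def drop2 {A : Type*} (w : List A) : List A := w.dropLast.dropLast

/-- `wordPow w t` is the `t`-fold concatenation `w^t`. -/
def wordPow {A : Type*} (w : List A) (t : ℕ) : List A := (List.replicate t w).flatten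

/-- `l` is a prefix of the infinite word `f : ℕ → A`. -/
def IsPrefixOfInf {A : Type*} (l : List A) (f : ℕ → A) : Prop :=
  l = (List.range l.length).map f

namespace Stmt11Aux

variable {A : Type*}

lemma wordPow_zero (w : List A) : wordPow w 0 = [] := rfl

lemma wordPow_one (w : List A) : wordPow w 1 = w := by simp [wordPow]

lemma wordPow_succ (w : List A) (t : ℕ) : wordPow w (t + 1) = w ++ wordPow w t := by
  simp [wordPow, List.replicate_succ]

lemma wordPow_succ' (w : List A) (t : ℕ) : wordPow w (t + 1) = wordPow w t ++ w := by
  simp [wordPow, List.replicate_succ']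

lemma wordPow_add (w : List A) (i j : ℕ) :
    wordPow w (i + j) = wordPow w i ++ wordPow w j := by
  induction i with
  | zero => simp [wordPow_zero]
  | succ i ih =>
    rw [show i + 1 + j = (i + j) + 1 by omega, wordPow_succ, ih, wordPow_succ]
    simp

lemma wordPow_length (w : List A) (t : ℕ) : (wordPow w t).length = t * w.length := by
  induction t with
  | zero => simp [wordPow_zero]
  | succ t ih => rw [wordPow_succ]; simp [ih]; ring

lemma reverse_wordPow (w : List A) (t : ℕ) :
    (wordPow w t).reverse = wordPow w.reverse t := by
  induction t with
  | zero => simp [wordPow_zero]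
  | succ t ih => rw [wordPow_succ, wordPow_succ']; simp [ih]

lemma drop2_append (u v : List A) (h : 2 ≤ v.length) : drop2 (u ++ v) = u ++ drop2 v := by
  unfold drop2
  rw [List.dropLast_append_of_ne_nil (l' := u) (l := v) (by intro hv; simp [hv] at h),
      List.dropLast_append_of_ne_nil (l' := u) (l := v.dropLast) (by
        intro hv
        have := congrArg List.length hv
        simp [List.length_dropLast] at this
        omega)]

lemma drop2_prefix (l : List A) : drop2 l <+: l :=
  (List.dropLast_prefix _).trans (List.dropLast_prefix _)

lemma drop2_length (l : List A) : (drop2 l).length = l.length - 2 := by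
  simp [drop2, List.length_dropLast]; omega

lemma drop2_append_two (u : List A) (x y : A) : drop2 (u ++ [x, y]) = u := by
  unfold drop2
  rw [show u ++ [x, y] = (u ++ [x]) ++ [y] by simp, List.dropLast_concat, List.dropLast_concat]

lemma commute_pow {P M : List A} (h : P ++ M.reverse = M ++ P) (j : ℕ) :
    P ++ wordPow M.reverse j = wordPow M j ++ P := by
  induction j with
  | zero => simp [wordPow_zero]
  | succ j ih =>
    rw [wordPow_succ M, wordPow_succ M.reverse, ← List.append_assoc, h,
      List.append_assoc, ih, ← List.append_assoc]

lemma prefixInf_mono {l l' : List A} {f : ℕ → A} (h : l <+: l')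
    (h' : IsPrefixOfInf l' f) : IsPrefixOfInf l f := by
  unfold IsPrefixOfInf at *
  have hl : l = l'.take l.length := by
    obtain ⟨t, rfl⟩ := h
    simp
  have hlen : min l.length l'.length = l.length := by
    have := h.length_le; omega
  rw [hl, h', ← List.map_take, List.take_range, hlen]; simp

end Stmt11Aux

open Stmt11Aux

/-- Lemma 5.3: the words `(m_k^t m_{k-1})'` for `k ≥ 1`, `1 ≤ t ≤ s_{k+1}`,
lexicographically ordered by `(k, t)`, form a strictly increasing (for the
prefix order) sequence of palindromic prefixes of the Sturmian word `m_φ`. -/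
theorem stmt11 {A : Type*} (a b : A) (hab : a ≠ b) (s : ℕ → ℕ) (hs : ∀ k, 1 ≤ s k)
    (m : ℕ → List A) (hm0 : m 0 = [b])
    (hm1 : m 1 = List.replicate (s 1 - 1) b ++ [a])
    (hmr : ∀ k : ℕ, 1 ≤ k → m (k + 1) = wordPow (m k) (s (k + 1)) ++ m (k - 1))
    (mφ : ℕ → A) (hφ : ∀ k : ℕ, 1 ≤ k → IsPrefixOfInf (m k) mφ) :
    ∀ k : ℕ, 1 ≤ k → ∀ t : ℕ, 1 ≤ t → t ≤ s (k + 1) →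
      (drop2 (wordPow (m k) t ++ m (k - 1))).reverse =
        drop2 (wordPow (m k) t ++ m (k - 1)) ∧
      IsPrefixOfInf (drop2 (wordPow (m k) t ++ m (k - 1))) mφ ∧
      (t < s (k + 1) →
        drop2 (wordPow (m k) t ++ m (k - 1)) <+:
          drop2 (wordPow (m k) (t + 1) ++ m (k - 1)) ∧
        (drop2 (wordPow (m k) t ++ m (k - 1))).length <
          (drop2 (wordPow (m k) (t + 1) ++ m (k - 1))).length) ∧
      (t = s (k + 1) →
        drop2 (wordPow (m k) t ++ m (k - 1)) <+:
          drop2 (wordPow (m (k + 1)) 1 ++ m k) ∧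
        (drop2 (wordPow (m k) t ++ m (k - 1))).length <
          (drop2 (wordPow (m (k + 1)) 1 ++ m k)).length) := by
  -- every m k is nonempty
  have hlen : ∀ k : ℕ, 1 ≤ (m k).length := by
    intro k
    induction k using Nat.strong_induction_on with
    | _ k ih =>
      match k with
      | 0 => simp [hm0]
      | 1 => simp [hm1]
      | (k+2) =>
        rw [show k + 2 = (k+1) + 1 from rfl, hmr (k+1) (by omega)]
        simp only [List.length_append, Nat.add_sub_cancel]
        have := ih k (by omega)
        omega
  -- the inductive package: palindromicity, swap, and the two commutations
  have pack : ∀ k : ℕ, 1 ≤ k →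
      (drop2 (m k ++ m (k-1))).reverse = drop2 (m k ++ m (k-1)) ∧
      drop2 (m (k-1) ++ m k) = drop2 (m k ++ m (k-1)) ∧
      drop2 (m k ++ m (k-1)) ++ (m k).reverse = m k ++ drop2 (m k ++ m (k-1)) ∧
      drop2 (m k ++ m (k-1)) ++ (m (k-1)).reverse = m (k-1) ++ drop2 (m k ++ m (k-1)) := by
    intro k hk
    induction k, hk using Nat.le_induction with
    | base =>
      simp only [show (1:ℕ) - 1 = 0 from rfl]
      have h10 : m 1 ++ m 0 = List.replicate (s 1 - 1) b ++ [a, b] := by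
        rw [hm1, hm0]; simp
      have h01 : m 0 ++ m 1 = List.replicate (s 1 - 1) b ++ [b, a] := by
        rw [hm1, hm0]
        rw [show ([b] : List A) ++ (List.replicate (s 1 - 1) b ++ [a])
              = (b :: List.replicate (s 1 - 1) b) ++ [a] by simp,
            ← List.replicate_succ, List.replicate_succ']
        simp
      rw [h10, h01, drop2_append_two, drop2_append_two]
      refine ⟨by simp, rfl, ?_, ?_⟩
      · rw [hm1]
        simp [List.reverse_append]
      · rw [hm0]
        simp only [List.reverse_singleton]
        rw [← List.replicate_succ', List.replicate_succ]
        simp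
    | succ k hk ih =>
      obtain ⟨ihPal, ihS, ihC, ihD⟩ := ih
      simp only [Nat.add_sub_cancel]
      have hrec : m (k+1) = wordPow (m k) (s (k+1)) ++ m (k-1) := hmr k hk
      have hNM : 2 ≤ (m (k-1) ++ m k).length := by
        have := hlen (k-1); have := hlen k; simp only [List.length_append]; omega
      have hMN : 2 ≤ (m k ++ m (k-1)).length := by
        have := hlen (k-1); have := hlen k; simp only [List.length_append]; omega
      have hP1 : drop2 (m (k+1) ++ m k)
          = wordPow (m k) (s (k+1)) ++ drop2 (m k ++ m (k-1)) := by
        rw [hrec, List.append_assoc, drop2_append _ _ hNM, ihS]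
      have hS1 : drop2 (m k ++ m (k+1))
          = wordPow (m k) (s (k+1)) ++ drop2 (m k ++ m (k-1)) := by
        rw [hrec, ← List.append_assoc,
          show m k ++ wordPow (m k) (s (k+1)) = wordPow (m k) (s (k+1)) ++ m k from
            (wordPow_succ (m k) (s (k+1))).symm.trans (wordPow_succ' (m k) (s (k+1))),
          List.append_assoc, drop2_append _ _ hMN]
      have hPal1 : (wordPow (m k) (s (k+1)) ++ drop2 (m k ++ m (k-1))).reverse
          = wordPow (m k) (s (k+1)) ++ drop2 (m k ++ m (k-1)) := by
        rw [List.reverse_append, ihPal, reverse_wordPow, commute_pow ihC]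
      refine ⟨by rw [hP1]; exact hPal1, by rw [hS1, hP1], ?_, ?_⟩
      · -- C(k+1)
        rw [hP1, hrec]
        rw [List.reverse_append, reverse_wordPow]
        calc wordPow (m k) (s (k+1)) ++ drop2 (m k ++ m (k-1))
              ++ ((m (k-1)).reverse ++ wordPow (m k).reverse (s (k+1)))
            = wordPow (m k) (s (k+1)) ++ ((drop2 (m k ++ m (k-1)) ++ (m (k-1)).reverse)
              ++ wordPow (m k).reverse (s (k+1))) := by simp [List.append_assoc]
          _ = wordPow (m k) (s (k+1)) ++ ((m (k-1) ++ drop2 (m k ++ m (k-1)))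
              ++ wordPow (m k).reverse (s (k+1))) := by rw [ihD]
          _ = wordPow (m k) (s (k+1)) ++ (m (k-1) ++ (drop2 (m k ++ m (k-1))
              ++ wordPow (m k).reverse (s (k+1)))) := by simp [List.append_assoc]
          _ = wordPow (m k) (s (k+1)) ++ (m (k-1) ++ (wordPow (m k) (s (k+1))
              ++ drop2 (m k ++ m (k-1)))) := by rw [commute_pow ihC]
          _ = wordPow (m k) (s (k+1)) ++ m (k-1)
              ++ (wordPow (m k) (s (k+1)) ++ drop2 (m k ++ m (k-1))) := by
                simp [List.append_assoc]
      · -- D(k+1)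
        rw [hP1]
        calc wordPow (m k) (s (k+1)) ++ drop2 (m k ++ m (k-1)) ++ (m k).reverse
            = wordPow (m k) (s (k+1)) ++ (drop2 (m k ++ m (k-1)) ++ (m k).reverse) := by
              simp [List.append_assoc]
          _ = wordPow (m k) (s (k+1)) ++ (m k ++ drop2 (m k ++ m (k-1))) := by rw [ihC]
          _ = (wordPow (m k) (s (k+1)) ++ m k) ++ drop2 (m k ++ m (k-1)) := by
              simp [List.append_assoc]
          _ = (m k ++ wordPow (m k) (s (k+1))) ++ drop2 (m k ++ m (k-1)) := by
              rw [← wordPow_succ' (m k) (s (k+1)), wordPow_succ]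
          _ = m k ++ (wordPow (m k) (s (k+1)) ++ drop2 (m k ++ m (k-1))) := by
              simp [List.append_assoc]
  -- m k <+: m (k+1) for k ≥ 1
  have hmpre : ∀ k : ℕ, 1 ≤ k → m k <+: m (k+1) := by
    intro k hk
    rw [hmr k hk, show s (k+1) = (s (k+1) - 1) + 1 by have := hs (k+1); omega,
      wordPow_succ, List.append_assoc]
    exact List.prefix_append _ _
  -- m (k+1) ++ m k <+: m (k+2) for k ≥ 1
  have h2 : ∀ k : ℕ, 1 ≤ k → m (k+1) ++ m k <+: m (k+2) := by
    intro k hk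
    have : m (k+2) = wordPow (m (k+1)) (s (k+2)) ++ m k := by
      have := hmr (k+1) (by omega)
      simpa using this
    rw [this, show s (k+2) = (s (k+2) - 1) + 1 by have := hs (k+2); omega,
      wordPow_succ, List.append_assoc]
    apply (List.prefix_append_right_inj (m (k+1))).mpr
    cases h : s (k+2) - 1 with
    | zero => simp [wordPow_zero]
    | succ i =>
      rw [wordPow_succ, List.append_assoc]
      exact (hmpre k hk).trans (List.prefix_append _ _)
  -- drop2 (m (k+1) ++ m k) is a prefix of mφ, for k ≥ 1
  have hPinf : ∀ k : ℕ, 1 ≤ k → IsPrefixOfInf (drop2 (m (k+1) ++ m k)) mφ := by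
    intro k hk
    exact prefixInf_mono ((drop2_prefix _).trans (h2 k hk)) (hφ (k+2) (by omega))
  -- main proof
  intro k hk t ht hts
  obtain ⟨hPal, hS, hC, hD⟩ := pack k hk
  have hMN : 2 ≤ (m k ++ m (k-1)).length := by
    have := hlen (k-1); have := hlen k; simp only [List.length_append]; omega
  have hW : ∀ u : ℕ, drop2 (wordPow (m k) (u+1) ++ m (k-1))
      = wordPow (m k) u ++ drop2 (m k ++ m (k-1)) := by
    intro u
    rw [wordPow_succ', List.append_assoc, drop2_append _ _ hMN]
  have hPk1 : drop2 (m (k+1) ++ m k)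
      = wordPow (m k) (s (k+1)) ++ drop2 (m k ++ m (k-1)) := by
    rw [hmr k hk, List.append_assoc, drop2_append _ _ (by
      have := hlen (k-1); have := hlen k; simp only [List.length_append]; omega), hS]
  -- prefix among the normal forms
  have hkey : ∀ u v : ℕ, u ≤ v →
      wordPow (m k) u ++ drop2 (m k ++ m (k-1)) <+:
        wordPow (m k) v ++ drop2 (m k ++ m (k-1)) := by
    intro u v huv
    refine ⟨wordPow (m k).reverse (v - u), ?_⟩
    rw [List.append_assoc, commute_pow hC, ← List.append_assoc, ← wordPow_add,
      show u + (v - u) = v by omega]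
  obtain ⟨t', rfl⟩ : ∃ t', t = t' + 1 := ⟨t - 1, by omega⟩
  have hWt := hW t'
  refine ⟨?_, ?_, ?_, ?_⟩
  · rw [hWt, List.reverse_append, hPal, reverse_wordPow, commute_pow hC]
  · refine prefixInf_mono ?_ (hPinf k hk)
    rw [hWt, hPk1]
    exact hkey t' (s (k+1)) (by omega)
  · intro hlt
    constructor
    · rw [hWt, hW (t'+1)]
      exact hkey t' (t'+1) (by omega)
    · rw [hWt, hW (t'+1)]
      simp only [List.length_append, wordPow_length]
      have h1 := hlen k
      have : (t' + 1) * (m k).length = t' * (m k).length + (m k).length :=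
        Nat.succ_mul _ _
      omega
  · intro heq
    have hgoal : drop2 (wordPow (m (k+1)) 1 ++ m k)
        = wordPow (m k) (s (k+1)) ++ drop2 (m k ++ m (k-1)) := by
      rw [wordPow_one, hPk1]
    constructor
    · rw [hWt, hgoal]
      exact hkey t' (s (k+1)) (by omega)
    · rw [hWt, hgoal]
      rw [← heq]
      simp only [List.length_append, wordPow_length]
      have h1 := hlen k
      have : (t' + 1) * (m k).length = t' * (m k).length + (m k).length :=
        Nat.succ_mul _ _
      omega
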